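/- arXiv:2011.11477 — 2 statements merged into one kernel-verified Lean document; each statement's English description precedes it below -/
import Mathlib

section
/- Let X ∈ ℝ^{n×p} with n < p and rank(X) = n, and let C_xx ∈ ℝ^{p×p} be symmetric positive definite (smallest eigenvalue λ_p > 0). For each m, let x₀^{(m)} = v + δ_m where v lies in the row space of X, δ_m ∉ row space of X, and δ_m → 0 as m → ∞; let X̃_m ∈ ℝ^{(n+1)×p} be X with the row (x₀^{(m)})ᵀ appended. Then the smallest nonzero eigenvalue of X̃_mᵀX̃_m tends to 0 as m → ∞, tr((X̃_mᵀX̃_m)^† C_xx) → ∞, and consequently the risk of the minimum-norm OLS estimator β̂_m = X̃_m^† Ỹ_m trained on the poisoned data (X̃_m, Ỹ_m) with Ỹ_m = X̃_m β + ε̃, ε̃ ~ N(0, σ²I_{n+1}), σ > 0, tends to infinity. -/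
/- STATEMENT 12: data-poisoning attack on min-norm OLS in the overparameterized regime.
X ∈ ℝ^{n×p}, n < p, rank(X) = n, C_xx symmetric positive definite (with C_xx = C_sqrt C_sqrtᵀ
used to model x* ~ N(0,C_xx) as x* = C_sqrt z). For each m, x₀^{(m)} = v + δ_m with v in the
row space of X, δ_m ∉ row space of X, δ_m → 0; X̃_m is X with the row (x₀^{(m)})ᵀ appended.
Then the smallest nonzero eigenvalue of X̃_mᵀX̃_m tends to 0, tr((X̃_mᵀX̃_m)^† C_xx) → ∞, and
the risk of the minimum-norm OLS estimator β̂_m = X̃_m^†Ỹ_m trained on the poisoned data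
(with Ỹ_m = X̃_mβ + ε̃, ε̃ ~ N(0,σ²I_{n+1})) tends to infinity. -/

open Matrix MeasureTheory ProbabilityTheory Filter
open scoped BigOperators NNReal Topology

/-- `P` is the Moore–Penrose pseudoinverse of `A`. -/
def IsMoorePenrose {m n : Type*} [Fintype m] [Fintype n]
    (A : Matrix m n ℝ) (P : Matrix n m ℝ) : Prop :=
  A * P * A = A ∧ P * A * P = P ∧ (A * P)ᵀ = A * P ∧ (P * A)ᵀ = P * A




section MatrixAux

variable {k l : Type*} [Fintype k] [Fintype l]

lemma isMoorePenrose_unique {A : Matrix k l ℝ} {P Q : Matrix l k ℝ}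
    (hP : IsMoorePenrose A P) (hQ : IsMoorePenrose A Q) : P = Q := by
  obtain ⟨hP1, hP2, hP3, hP4⟩ := hP
  obtain ⟨hQ1, hQ2, hQ3, hQ4⟩ := hQ
  have hAP : A * P = A * Q := by
    calc A * P = (A * Q * A) * P := by rw [hQ1]
    _ = (A * Q) * (A * P) := by simp only [Matrix.mul_assoc]
    _ = (A * Q)ᵀ * (A * P)ᵀ := by rw [hQ3, hP3]
    _ = ((A * P) * (A * Q))ᵀ := by simp only [Matrix.transpose_mul, Matrix.mul_assoc]
    _ = ((A * P * A) * Q)ᵀ := by simp only [Matrix.mul_assoc]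
    _ = (A * Q)ᵀ := by rw [hP1]
    _ = A * Q := hQ3
  have hPA : P * A = Q * A := by
    calc P * A = P * (A * Q * A) := by rw [hQ1]
    _ = (P * A) * (Q * A) := by simp only [Matrix.mul_assoc]
    _ = (P * A)ᵀ * (Q * A)ᵀ := by rw [hP4, hQ4]
    _ = ((Q * A) * (P * A))ᵀ := by simp only [Matrix.transpose_mul, Matrix.mul_assoc]
    _ = (Q * (A * P * A))ᵀ := by simp only [Matrix.mul_assoc]
    _ = (Q * A)ᵀ := by rw [hP1]
    _ = Q * A := hQ4
  calc P = P * A * P := hP2.symm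
  _ = P * (A * Q) := by rw [Matrix.mul_assoc, hAP]
  _ = (P * A) * Q := by simp only [Matrix.mul_assoc]
  _ = Q * A * Q := by rw [hPA]
  _ = Q := hQ2

lemma mp_ddt {A : Matrix k l ℝ} {D : Matrix l k ℝ}
    (h : IsMoorePenrose A D) : IsMoorePenrose (Aᵀ * A) (D * Dᵀ) := by
  obtain ⟨h1, h2, h3, h4⟩ := h
  have e1 : Dᵀ * Aᵀ = A * D := by rw [← Matrix.transpose_mul, h3]
  have e2 : Aᵀ * Dᵀ = D * A := by rw [← Matrix.transpose_mul, h4]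
  have key : (Aᵀ * A) * (D * Dᵀ) = D * A := by
    calc (Aᵀ * A) * (D * Dᵀ) = Aᵀ * ((A * D) * Dᵀ) := by
          simp only [Matrix.mul_assoc]
    _ = Aᵀ * ((Dᵀ * Aᵀ) * Dᵀ) := by rw [e1]
    _ = (Aᵀ * Dᵀ) * (Aᵀ * Dᵀ) := by simp only [Matrix.mul_assoc]
    _ = (D * A) * (D * A) := by rw [e2]
    _ = D * (A * D * A) := by simp only [Matrix.mul_assoc]
    _ = D * A := by rw [h1]
  have key2 : (D * Dᵀ) * (Aᵀ * A) = D * A := by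
    calc (D * Dᵀ) * (Aᵀ * A) = D * ((Dᵀ * Aᵀ) * A) := by
          simp only [Matrix.mul_assoc]
    _ = D * ((A * D) * A) := by rw [e1]
    _ = D * A := by rw [Matrix.mul_assoc] at h1 ⊢; rw [h1]
  refine ⟨?_, ?_, ?_, ?_⟩
  · calc (Aᵀ * A) * (D * Dᵀ) * (Aᵀ * A) = (D * A) * (Aᵀ * A) := by rw [key]
    _ = ((D * A)ᵀ * Aᵀ) * A := by rw [h4]; simp only [Matrix.mul_assoc]
    _ = (A * (D * A))ᵀ * A := by simp only [Matrix.transpose_mul, Matrix.mul_assoc]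
    _ = (A * D * A)ᵀ * A := by simp only [Matrix.mul_assoc]
    _ = Aᵀ * A := by rw [h1]
  · calc (D * Dᵀ) * (Aᵀ * A) * (D * Dᵀ) = (D * A) * (D * Dᵀ) := by rw [key2]
    _ = (D * A * D) * Dᵀ := by simp only [Matrix.mul_assoc]
    _ = D * Dᵀ := by rw [h2]
  · rw [key, h4]
  · rw [key2, h4]

end MatrixAux



section Spectral

variable {k : Type*} [Fintype k] [DecidableEq k]

lemma vecMulVec_mul_vecMulVec (a b c d : k → ℝ) :
    vecMulVec a b * vecMulVec c d = (b ⬝ᵥ c) • vecMulVec a d := by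
  ext i j
  simp only [Matrix.mul_apply, vecMulVec_apply, Matrix.smul_apply, dotProduct, smul_eq_mul,
    Finset.sum_mul]
  exact Finset.sum_congr rfl fun x _ => by ring

lemma sum_smul_vecMulVec_mul (u : k → k → ℝ)
    (horth : ∀ i j, u i ⬝ᵥ u j = if i = j then (1:ℝ) else 0) (a b : k → ℝ) :
    (∑ j, a j • vecMulVec (u j) (u j)) * (∑ j, b j • vecMulVec (u j) (u j))
      = ∑ j, (a j * b j) • vecMulVec (u j) (u j) := by
  rw [Finset.sum_mul]
  refine Finset.sum_congr rfl fun j _ => ?_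
  rw [Finset.mul_sum]
  have : ∀ i, (a j • vecMulVec (u j) (u j)) * (b i • vecMulVec (u i) (u i))
      = if j = i then (a j * b j) • vecMulVec (u j) (u j) else 0 := by
    intro i
    rw [Matrix.smul_mul, Matrix.mul_smul, _root_.vecMulVec_mul_vecMulVec, horth]
    by_cases h : j = i
    · subst h; simp [if_pos rfl, smul_smul, mul_comm]
    · simp [if_neg h, h]
  simp_rw [this]
  rw [Finset.sum_ite_eq, if_pos (Finset.mem_univ j)]

lemma mp_spectral (lam : k → ℝ) (u : k → k → ℝ)
    (horth : ∀ i j, u i ⬝ᵥ u j = if i = j then (1:ℝ) else 0) :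
    IsMoorePenrose (∑ j, lam j • vecMulVec (u j) (u j))
      (∑ j, (lam j)⁻¹ • vecMulVec (u j) (u j)) := by
  have habc : ∀ (a b : k → ℝ),
      (∑ j, a j • vecMulVec (u j) (u j)) * (∑ j, b j • vecMulVec (u j) (u j))
        = ∑ j, (a j * b j) • vecMulVec (u j) (u j) := sum_smul_vecMulVec_mul u horth
  have hsymm : ∀ (a : k → ℝ), (∑ j, a j • vecMulVec (u j) (u j))ᵀ
      = ∑ j, a j • vecMulVec (u j) (u j) := by
    intro a
    rw [Matrix.transpose_sum]
    exact Finset.sum_congr rfl fun j _ => by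
      rw [Matrix.transpose_smul]
      congr 1
      ext i j
      simp [vecMulVec_apply, mul_comm]
  refine ⟨?_, ?_, ?_, ?_⟩
  · rw [habc, habc]
    exact Finset.sum_congr rfl fun j _ => by
      rcases eq_or_ne (lam j) 0 with h | h
      · simp [h]
      · rw [mul_inv_cancel₀ h, one_mul]
  · rw [habc, habc]
    exact Finset.sum_congr rfl fun j _ => by
      rcases eq_or_ne (lam j) 0 with h | h
      · simp [h]
      · rw [inv_mul_cancel₀ h, one_mul]
  · rw [habc, hsymm]
  · rw [habc, hsymm]

end Spectral



section GaussOneDim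

lemma integrable_sq_mul_exp_neg_mul_sq {b : ℝ} (hb : 0 < b) :
    Integrable (fun x : ℝ => x ^ 2 * Real.exp (-b * x ^ 2)) := by
  have hint := (integrable_exp_neg_mul_sq (show 0 < b / 2 by linarith)).const_mul (2 / b)
  refine hint.mono' ?_ ?_
  · exact ((continuous_pow 2).mul (by continuity)).aestronglyMeasurable
  · filter_upwards with x
    rw [Real.norm_eq_abs, abs_of_nonneg (by positivity)]
    have h2 : (b / 2) * x ^ 2 ≤ Real.exp ((b / 2) * x ^ 2) := by
      have := Real.add_one_le_exp ((b / 2) * x ^ 2)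
      linarith
    have hx2 : x ^ 2 ≤ (2 / b) * Real.exp ((b / 2) * x ^ 2) := by
      have e := mul_le_mul_of_nonneg_left h2 (show (0:ℝ) ≤ 2 / b by positivity)
      have h3 : (2 / b) * ((b / 2) * x ^ 2) = x ^ 2 := by field_simp
      linarith
    calc x ^ 2 * Real.exp (-b * x ^ 2)
        ≤ ((2 / b) * Real.exp ((b / 2) * x ^ 2)) * Real.exp (-b * x ^ 2) :=
          mul_le_mul_of_nonneg_right hx2 (Real.exp_pos _).le
    _ = (2 / b) * Real.exp (-(b / 2) * x ^ 2) := by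
          rw [mul_assoc, ← Real.exp_add]; ring_nf

variable {v : ℝ≥0}

lemma gaussianPDFReal_zero_eq (v : ℝ≥0) (hv : v ≠ 0) (x : ℝ) :
    gaussianPDFReal 0 v x
      = (Real.sqrt (2 * Real.pi * v))⁻¹ * Real.exp (-(2 * (v:ℝ))⁻¹ * x ^ 2) := by
  have hvpos : (0:ℝ) < (v:ℝ) := by positivity
  rw [gaussianPDFReal_def]
  simp only [sub_zero]
  congr 1
  field_simp

lemma integrable_id_gaussianReal (hv : v ≠ 0) :
    Integrable (fun x : ℝ => x) (gaussianReal 0 v) := by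
  have hvpos : (0:ℝ) < (v:ℝ) := by
    have := hv
    positivity
  rw [gaussianReal_of_var_ne_zero 0 hv,
    integrable_withDensity_iff (measurable_gaussianPDF 0 v)
      (ae_of_all _ fun x => ENNReal.ofReal_lt_top)]
  have : (fun x : ℝ => x * ((gaussianPDF 0 v x).toReal))
      = fun x => (Real.sqrt (2 * Real.pi * v))⁻¹ * (x * Real.exp (-(2 * (v:ℝ))⁻¹ * x ^ 2)) := by
    funext x
    rw [gaussianPDF_def, ENNReal.toReal_ofReal (gaussianPDFReal_nonneg 0 v x),
      gaussianPDFReal_zero_eq v hv]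
    ring
  rw [this]
  exact (integrable_mul_exp_neg_mul_sq (by positivity)).const_mul _

lemma integrable_sq_gaussianReal (hv : v ≠ 0) :
    Integrable (fun x : ℝ => x ^ 2) (gaussianReal 0 v) := by
  have hvpos : (0:ℝ) < (v:ℝ) := by
    have := hv
    positivity
  rw [gaussianReal_of_var_ne_zero 0 hv,
    integrable_withDensity_iff (measurable_gaussianPDF 0 v)
      (ae_of_all _ fun x => ENNReal.ofReal_lt_top)]
  have : (fun x : ℝ => x ^ 2 * ((gaussianPDF 0 v x).toReal))
      = fun x => (Real.sqrt (2 * Real.pi * v))⁻¹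
          * (x ^ 2 * Real.exp (-(2 * (v:ℝ))⁻¹ * x ^ 2)) := by
    funext x
    rw [gaussianPDF_def, ENNReal.toReal_ofReal (gaussianPDFReal_nonneg 0 v x),
      gaussianPDFReal_zero_eq v hv]
    ring
  rw [this]
  exact (integrable_sq_mul_exp_neg_mul_sq (by positivity)).const_mul _

lemma gaussianReal_mean_zero (v : ℝ≥0) :
    ∫ x, x ∂(gaussianReal 0 v) = 0 := by
  rcases eq_or_ne v 0 with hv | hv
  · rw [hv, gaussianReal_zero_var, integral_dirac]
  · have hmap := gaussianReal_map_const_mul (μ := 0) (v := v) (-1)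
    have hv1 : (NNReal.mk ((-1:ℝ) ^ 2) (sq_nonneg _) : ℝ≥0) = 1 := by
      ext; norm_num
    rw [mul_zero, hv1, one_mul] at hmap
    have hmeas : AEMeasurable (fun x : ℝ => -1 * x) (gaussianReal 0 v) :=
      (measurable_id.const_mul _).aemeasurable
    have hint : ∫ x, x ∂(gaussianReal 0 v) = ∫ x, (-1 * x) ∂(gaussianReal 0 v) := by
      conv_lhs => rw [← hmap]
      exact integral_map hmeas measurable_id.aestronglyMeasurable
    rw [integral_const_mul] at hint
    linarith

lemma gaussianReal_var_pos (hv : v ≠ 0) :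
    0 < ∫ x, x ^ 2 ∂(gaussianReal 0 v) := by
  rw [integral_pos_iff_support_of_nonneg (fun x => sq_nonneg x) (integrable_sq_gaussianReal hv)]
  have hsupp : Function.support (fun x : ℝ => x ^ 2) = {(0:ℝ)}ᶜ := by
    ext x
    simp [Function.mem_support, pow_eq_zero_iff]
  rw [hsupp]
  have h0 : gaussianReal 0 v {(0:ℝ)} = 0 :=
    gaussianReal_absolutelyContinuous 0 hv Real.volume_singleton
  rw [measure_compl (measurableSet_singleton 0) (by simp [h0])]
  simp [h0]

end GaussOneDim



section PiMoments

variable {kk : ℕ}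

set_option maxHeartbeats 2000000 in
lemma pi_dot_sq_integral (μ : Measure ℝ) [IsProbabilityMeasure μ]
    (h1 : Integrable (fun x : ℝ => x) μ) (h2 : Integrable (fun x : ℝ => x ^ 2) μ)
    (hm : ∫ x, x ∂μ = 0) (c : ℝ) (a : Fin kk → ℝ) :
    Integrable (fun z : Fin kk → ℝ => (c + a ⬝ᵥ z) ^ 2) (Measure.pi fun _ => μ) ∧
      ∫ z : Fin kk → ℝ, (c + a ⬝ᵥ z) ^ 2 ∂(Measure.pi fun _ => μ)
        = c ^ 2 + (∫ x, x ^ 2 ∂μ) * ∑ i, a i ^ 2 := by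
  letI : MeasureSpace ℝ := ⟨μ⟩
  have hμ : (volume : Measure ℝ) = μ := rfl
  haveI : SigmaFinite (volume : Measure ℝ) := by rw [hμ]; infer_instance
  have hpi : (Measure.pi fun _ : Fin kk => μ) = (volume : Measure (Fin kk → ℝ)) := by
    rw [volume_pi]; rfl
  rw [hpi]
  -- linear monomials
  have hlin : ∀ i : Fin kk, Integrable (fun z : Fin kk → ℝ => z i) volume ∧
      ∫ z : Fin kk → ℝ, z i = 0 := by
    intro i
    have hrep : (fun z : Fin kk → ℝ => z i)
        = fun z => ∏ t, (fun t (x : ℝ) => if t = i then x else 1) t (z t) := by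
      funext z
      simp only
      rw [Finset.prod_ite_eq' Finset.univ i (fun t => z t), if_pos (Finset.mem_univ i)]
    have hint : ∀ t : Fin kk, Integrable ((fun t (x : ℝ) => if t = i then x else 1) t) volume := by
      intro t
      by_cases h : t = i
      · simpa [h] using (show Integrable (fun x : ℝ => x) volume from h1)
      · simpa [h] using (integrable_const (1:ℝ))
    constructor
    · rw [hrep]; exact Integrable.fintype_prod hint
    · calc ∫ z : Fin kk → ℝ, z i
          = ∏ t, ∫ x : ℝ, (if t = i then x else 1) := by
            rw [hrep]; exact integral_fintype_prod_eq_prod (fun t (x : ℝ) => if t = i then x else 1)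
      _ = 0 := Finset.prod_eq_zero (Finset.mem_univ i) (by simpa [hμ] using hm)
  -- diagonal quadratic monomials
  have hdiag : ∀ i : Fin kk, Integrable (fun z : Fin kk → ℝ => z i * z i) volume ∧
      ∫ z : Fin kk → ℝ, z i * z i = ∫ x, x ^ 2 ∂μ := by
    intro i
    have hrep : (fun z : Fin kk → ℝ => z i * z i)
        = fun z => ∏ t, (fun t (x : ℝ) => if t = i then x ^ 2 else 1) t (z t) := by
      funext z
      simp only
      rw [Finset.prod_ite_eq' Finset.univ i (fun t => (z t) ^ 2), if_pos (Finset.mem_univ i)]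
      ring
    have hint : ∀ t : Fin kk,
        Integrable ((fun t (x : ℝ) => if t = i then x ^ 2 else 1) t) volume := by
      intro t
      by_cases h : t = i
      · simpa [h] using (show Integrable (fun x : ℝ => x ^ 2) volume from h2)
      · simpa [h] using (integrable_const (1:ℝ))
    constructor
    · rw [hrep]; exact Integrable.fintype_prod hint
    · calc ∫ z : Fin kk → ℝ, z i * z i
          = ∏ t, ∫ x : ℝ, (if t = i then x ^ 2 else 1) := by
            rw [hrep]; exact integral_fintype_prod_eq_prod (fun t (x : ℝ) => if t = i then x ^ 2 else 1)
      _ = ∫ x, x ^ 2 ∂μ := by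
            rw [Finset.prod_eq_single i (fun t _ ht => by simp [ht]) (by simp)]
            simp [hμ]
  -- off-diagonal quadratic monomials
  have hoff : ∀ i j : Fin kk, i ≠ j → Integrable (fun z : Fin kk → ℝ => z i * z j) volume ∧
      ∫ z : Fin kk → ℝ, z i * z j = 0 := by
    intro i j hij
    have hrep : (fun z : Fin kk → ℝ => z i * z j)
        = fun z => ∏ t, (fun t (x : ℝ) => if t = i then x else if t = j then x else 1) t (z t) := by
      funext z
      simp only
      rw [← Finset.mul_prod_erase Finset.univ _ (Finset.mem_univ i), if_pos rfl]
      rw [← Finset.mul_prod_erase (Finset.univ.erase i) _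
        (Finset.mem_erase.mpr ⟨hij.symm, Finset.mem_univ j⟩)]
      rw [if_neg hij.symm, if_pos rfl]
      rw [Finset.prod_eq_one, mul_one]
      intro t ht
      rw [Finset.mem_erase] at ht
      obtain ⟨htj, hti⟩ := ht
      rw [Finset.mem_erase] at hti
      rw [if_neg hti.1, if_neg htj]
    have hint : ∀ t : Fin kk,
        Integrable ((fun t (x : ℝ) => if t = i then x else if t = j then x else 1) t) volume := by
      intro t
      by_cases h : t = i
      · simpa [h] using (show Integrable (fun x : ℝ => x) volume from h1)
      · by_cases h' : t = j
        · simpa [h, h'] using (show Integrable (fun x : ℝ => x) volume from h1)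
        · simpa [h, h'] using (integrable_const (1:ℝ))
    constructor
    · rw [hrep]; exact Integrable.fintype_prod hint
    · calc ∫ z : Fin kk → ℝ, z i * z j
          = ∏ t, ∫ x : ℝ, (if t = i then x else if t = j then x else 1) := by
            rw [hrep]; exact integral_fintype_prod_eq_prod (fun t (x : ℝ) => if t = i then x else if t = j then x else 1)
      _ = 0 := Finset.prod_eq_zero (Finset.mem_univ i) (by simpa [hμ] using hm)
  -- quadratic monomials, combined
  have hquad_int : ∀ i j : Fin kk,
      Integrable (fun z : Fin kk → ℝ => (a i * a j) * (z i * z j)) volume := by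
    intro i j
    by_cases h : i = j
    · subst h; exact (hdiag i).1.const_mul _
    · exact (hoff i j h).1.const_mul _
  have hz : ∀ i j : Fin kk,
      ∫ z : Fin kk → ℝ, z i * z j = if i = j then (∫ x, x ^ 2 ∂μ) else 0 := by
    intro i j
    by_cases h : i = j
    · subst h; simp [(hdiag i).2]
    · simp [h, (hoff i j h).2]
  -- expansion
  have hexp : (fun z : Fin kk → ℝ => (c + a ⬝ᵥ z) ^ 2)
      = fun z => (c ^ 2 + ∑ i, (2 * c * a i) * z i)
          + ∑ i, ∑ j, (a i * a j) * (z i * z j) := by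
    funext z
    simp only [dotProduct]
    have e1 : ∑ i, ∑ j, (a i * a j) * (z i * z j)
        = (∑ i, a i * z i) * (∑ j, a j * z j) := by
      rw [Finset.sum_mul_sum]
      exact Finset.sum_congr rfl fun i _ => Finset.sum_congr rfl fun j _ => by ring
    have e2 : ∑ i, (2 * c * a i) * z i = 2 * c * ∑ i, a i * z i := by
      rw [Finset.mul_sum]
      exact Finset.sum_congr rfl fun i _ => by ring
    rw [e1, e2]
    ring
  have I2 : Integrable (fun z : Fin kk → ℝ =>
      ∑ i, ∑ j, (a i * a j) * (z i * z j)) volume :=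
    integrable_finset_sum _ fun i _ => integrable_finset_sum _ fun j _ => hquad_int i j
  have I1 : Integrable (fun z : Fin kk → ℝ => c ^ 2 + ∑ i, (2 * c * a i) * z i) volume :=
    (integrable_const _).add
      (integrable_finset_sum _ fun i _ => ((hlin i).1.const_mul _))
  constructor
  · rw [hexp]; exact I1.add I2
  · rw [hexp, integral_add I1 I2,
      integral_add (integrable_const _) (integrable_finset_sum _ fun i _ => ((hlin i).1.const_mul _)),
      integral_const,
      integral_finset_sum _ (fun i _ => ((hlin i).1.const_mul _)),
      integral_finset_sum _ (fun i _ => integrable_finset_sum _ fun j _ => hquad_int i j)]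
    simp_rw [integral_finset_sum _ (fun j _ => hquad_int _ j), integral_const_mul, hz,
      (fun i => (hlin i).2)]
    simp only [mul_zero, Finset.sum_const_zero, add_zero, mul_ite]
    rw [probReal_univ]
    simp only [ENNReal.toReal_one, smul_eq_mul, one_mul, mul_zero]
    rw [Finset.mul_sum]
    congr 1
    refine Finset.sum_congr rfl fun i _ => ?_
    rw [Finset.sum_ite_eq, if_pos (Finset.mem_univ i)]
    ring
end PiMoments



section Eig

lemma dot_sum_smul {p m : ℕ} (x : Fin p → ℝ) (c : Fin m → ℝ) (g : Fin m → Fin p → ℝ) :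
    x ⬝ᵥ (∑ j, c j • g j) = ∑ j, c j * (x ⬝ᵥ g j) := by
  simp only [dotProduct, Finset.sum_apply, Pi.smul_apply, smul_eq_mul, Finset.mul_sum]
  rw [Finset.sum_comm]
  exact Finset.sum_congr rfl fun j _ => Finset.sum_congr rfl fun i _ => by ring

lemma dotProduct_pos_of_ne_zero {p : ℕ} {w : Fin p → ℝ} (hw : w ≠ 0) : 0 < w ⬝ᵥ w := by
  obtain ⟨i, hi⟩ := Function.ne_iff.mp hw
  exact Finset.sum_pos' (fun j _ => mul_self_nonneg _) ⟨i, Finset.mem_univ i, mul_self_pos.mpr hi⟩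

lemma span_dot_eq_zero {n p : ℕ} (X : Matrix (Fin n) (Fin p) ℝ) (w : Fin p → ℝ)
    (hw : X *ᵥ w = 0) {x : Fin p → ℝ}
    (hx : x ∈ Submodule.span ℝ (Set.range fun i : Fin n => X i)) : x ⬝ᵥ w = 0 := by
  induction hx using Submodule.span_induction with
  | mem y hy =>
      obtain ⟨i, rfl⟩ := hy
      have := congrFun hw i
      simpa [Matrix.mulVec, dotProduct] using this
  | zero => simp
  | add y z _ _ hy hz => rw [add_dotProduct, hy, hz, add_zero]
  | smul c y _ hy => rw [smul_dotProduct, hy, smul_zero]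

lemma spectral_mulVec {p : ℕ} (lam : Fin p → ℝ) (u : Fin p → Fin p → ℝ) (w : Fin p → ℝ) :
    (∑ j, lam j • vecMulVec (u j) (u j)) *ᵥ w = ∑ j, (lam j * (u j ⬝ᵥ w)) • u j := by
  funext i
  simp only [Matrix.mulVec, dotProduct, Matrix.sum_apply, Finset.sum_apply, Matrix.smul_apply,
    vecMulVec_apply, smul_eq_mul, Pi.smul_apply, Finset.sum_mul, Finset.mul_sum]
  rw [Finset.sum_comm]
  exact Finset.sum_congr rfl fun j _ => Finset.sum_congr rfl fun k _ => by ring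

lemma smallest_nonzero_eig_le
    {n p : ℕ} (hnp : n < p) (X : Matrix (Fin n) (Fin p) ℝ) (hrank : X.rank = n)
    (v δv : Fin p → ℝ)
    (hv : v ∈ Submodule.span ℝ (Set.range fun i : Fin n => X i))
    (Xt : Matrix (Fin (n + 1)) (Fin p) ℝ)
    (hXt : Xt = Matrix.of (Fin.snoc (fun i : Fin n => fun j => X i j) (v + δv)))
    (lam : Fin p → ℝ) (u : Fin p → Fin p → ℝ)
    (hanti : ∀ i j : Fin p, i ≤ j → lam j ≤ lam i)
    (horth : ∀ i j, u i ⬝ᵥ u j = if i = j then (1:ℝ) else 0)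
    (hdec : Xtᵀ * Xt = ∑ j, lam j • vecMulVec (u j) (u j)) :
    lam ⟨n, hnp⟩ ≤ δv ⬝ᵥ δv := by
  have hn1p : n + 1 ≤ p := hnp
  set g : Fin (n + 1) → (Fin p → ℝ) := fun j => u (Fin.castLE hn1p j) with hg
  have hgli : LinearIndependent ℝ g := by
    rw [Fintype.linearIndependent_iff]
    intro c hc t
    have hdot := congrArg (fun w => u (Fin.castLE hn1p t) ⬝ᵥ w) hc
    simp only [dot_sum_smul, dotProduct_zero, hg, horth, Fin.castLE_inj] at hdot
    simp only [mul_ite, mul_one, mul_zero] at hdot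
    rwa [Finset.sum_ite_eq, if_pos (Finset.mem_univ t)] at hdot
  set T : Submodule ℝ (Fin p → ℝ) := Submodule.span ℝ (Set.range g) with hT
  set W : Submodule ℝ (Fin p → ℝ) := LinearMap.ker X.mulVecLin with hW
  have hfinT : Module.finrank ℝ T = n + 1 := by
    rw [hT, finrank_span_eq_card hgli, Fintype.card_fin]
  have hfinW : n + Module.finrank ℝ W = p := by
    have h := LinearMap.finrank_range_add_finrank_ker X.mulVecLin
    rw [Module.finrank_fintype_fun_eq_card, Fintype.card_fin] at h
    have hr : Module.finrank ℝ (LinearMap.range X.mulVecLin) = n := hrank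
    rw [hr] at h
    exact h
  have hsup : Module.finrank ℝ (T ⊔ W : Submodule ℝ (Fin p → ℝ)) ≤ p := by
    have := Submodule.finrank_le (T ⊔ W : Submodule ℝ (Fin p → ℝ))
    rwa [Module.finrank_fintype_fun_eq_card, Fintype.card_fin] at this
  have hint_pos : 0 < Module.finrank ℝ (T ⊓ W : Submodule ℝ (Fin p → ℝ)) := by
    have := Submodule.finrank_sup_add_finrank_inf_eq T W
    omega
  have hne : (T ⊓ W : Submodule ℝ (Fin p → ℝ)) ≠ ⊥ := by
    intro h
    rw [h, finrank_bot] at hint_pos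
    exact lt_irrefl 0 hint_pos
  obtain ⟨w, hwTW, hw0⟩ := (Submodule.ne_bot_iff _).mp hne
  obtain ⟨hwT, hwW⟩ := Submodule.mem_inf.mp hwTW
  have hXw : X *ᵥ w = 0 := hwW
  have hrowdot : ∀ i : Fin n, X i ⬝ᵥ w = 0 := fun i => by
    have := congrFun hXw i
    simpa [Matrix.mulVec, dotProduct] using this
  have hvdot : v ⬝ᵥ w = 0 := span_dot_eq_zero X w hXw hv
  have hhigh : ∀ j : Fin p, n < (j : ℕ) → u j ⬝ᵥ w = 0 := by
    intro j hj
    obtain ⟨c, hc⟩ := (Submodule.mem_span_range_iff_exists_fun ℝ).mp hwT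
    rw [← hc, dot_sum_smul]
    refine Finset.sum_eq_zero fun t _ => ?_
    rw [hg]
    have hne' : j ≠ Fin.castLE hn1p t := by
      intro h
      have : (j : ℕ) = (t : ℕ) := by rw [h]; rfl
      have ht := t.isLt
      omega
    rw [horth, if_neg hne', mul_zero]
  -- quadratic form two ways
  have hq1 : w ⬝ᵥ ((Xtᵀ * Xt) *ᵥ w) = ∑ j, lam j * (u j ⬝ᵥ w) ^ 2 := by
    rw [hdec, spectral_mulVec, dot_sum_smul]
    refine Finset.sum_congr rfl fun j _ => ?_
    rw [dotProduct_comm w (u j)]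
    ring
  have hq2 : w ⬝ᵥ ((Xtᵀ * Xt) *ᵥ w) = (δv ⬝ᵥ w) ^ 2 := by
    rw [← Matrix.mulVec_mulVec, Matrix.dotProduct_mulVec w Xtᵀ, Matrix.vecMul_transpose]
    have hXtrow_last : Xt (Fin.last n) = v + δv := by
      rw [hXt]
      show Fin.snoc (α := fun _ : Fin (n+1) => Fin p → ℝ) (fun i => fun j => X i j)
        (v + δv) (Fin.last n) = v + δv
      rw [Fin.snoc_last]
    have hXtrow_cast : ∀ k : Fin n, Xt (Fin.castSucc k) = X k := by
      intro k
      rw [hXt]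
      show Fin.snoc (α := fun _ : Fin (n+1) => Fin p → ℝ) (fun i => fun j => X i j)
        (v + δv) (Fin.castSucc k) = X k
      rw [Fin.snoc_castSucc]
    have hXtw : Xt *ᵥ w = Fin.snoc (fun _ : Fin n => (0:ℝ)) (δv ⬝ᵥ w) := by
      funext i
      induction i using Fin.lastCases with
      | last =>
        rw [Fin.snoc_last]
        show Xt (Fin.last n) ⬝ᵥ w = δv ⬝ᵥ w
        rw [hXtrow_last, add_dotProduct, hvdot, zero_add]
      | cast k =>
        rw [Fin.snoc_castSucc]
        show Xt (Fin.castSucc k) ⬝ᵥ w = 0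
        rw [hXtrow_cast k]
        exact hrowdot k
    rw [hXtw]
    simp [dotProduct, Fin.sum_univ_castSucc, sq]
  -- the orthonormal family is a basis: Parseval
  set U : Matrix (Fin p) (Fin p) ℝ := Matrix.of u with hU
  have hUU : U * Uᵀ = 1 := by
    ext i j
    have := horth i j
    simpa [Matrix.mul_apply, dotProduct, Matrix.one_apply, hU] using this
  have hUtU : Uᵀ * U = 1 := mul_eq_one_comm.mp hUU
  have hww : ∑ j, (u j ⬝ᵥ w) ^ 2 = w ⬝ᵥ w := by
    have h1 : (U *ᵥ w) ⬝ᵥ (U *ᵥ w) = w ⬝ᵥ w := by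
      rw [Matrix.dotProduct_mulVec (U *ᵥ w) U w]
      conv_lhs => rw [← Matrix.vecMul_transpose U w]
      rw [Matrix.vecMul_vecMul, hUtU, Matrix.vecMul_one]
    rw [← h1]
    simp [dotProduct, sq, Matrix.mulVec, hU]
  -- the key chain
  have hchain : lam ⟨n, hnp⟩ * (w ⬝ᵥ w) ≤ (δv ⬝ᵥ δv) * (w ⬝ᵥ w) := by
    have h1 : lam ⟨n, hnp⟩ * (w ⬝ᵥ w) ≤ ∑ j, lam j * (u j ⬝ᵥ w) ^ 2 := by
      rw [← hww, Finset.mul_sum]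
      refine Finset.sum_le_sum fun j _ => ?_
      by_cases hj : (j : ℕ) ≤ n
      · exact mul_le_mul_of_nonneg_right
          (hanti j ⟨n, hnp⟩ (by rw [Fin.le_def]; exact hj)) (sq_nonneg _)
      · rw [hhigh j (by omega)]
        simp
    have h2 : (δv ⬝ᵥ w) ^ 2 ≤ (δv ⬝ᵥ δv) * (w ⬝ᵥ w) := by
      have := Finset.sum_mul_sq_le_sq_mul_sq Finset.univ δv w
      have e1 : ∀ x : Fin p → ℝ, x ⬝ᵥ x = ∑ i, x i ^ 2 := fun x =>
        Finset.sum_congr rfl fun i _ => (sq (x i)).symm ▸ rfl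
      calc (δv ⬝ᵥ w) ^ 2 = (∑ i, δv i * w i) ^ 2 := rfl
      _ ≤ (∑ i, δv i ^ 2) * ∑ i, w i ^ 2 := this
      _ = (δv ⬝ᵥ δv) * (w ⬝ᵥ w) := by
          rw [show (δv ⬝ᵥ δv) = ∑ i, δv i ^ 2 from by simp [dotProduct, sq],
            show (w ⬝ᵥ w) = ∑ i, w i ^ 2 from by simp [dotProduct, sq]]
    calc lam ⟨n, hnp⟩ * (w ⬝ᵥ w) ≤ ∑ j, lam j * (u j ⬝ᵥ w) ^ 2 := h1
    _ = (δv ⬝ᵥ w) ^ 2 := by rw [← hq1, hq2]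
    _ ≤ (δv ⬝ᵥ δv) * (w ⬝ᵥ w) := h2
  exact le_of_mul_le_mul_right hchain (dotProduct_pos_of_ne_zero hw0)

lemma posdef_quadform_lb {p : ℕ} (hp : 0 < p) (C : Matrix (Fin p) (Fin p) ℝ) (hC : C.PosDef) :
    ∃ mu : ℝ, 0 < mu ∧ ∀ w : Fin p → ℝ, w ⬝ᵥ w = 1 → mu ≤ w ⬝ᵥ (C *ᵥ w) := by
  set f : (Fin p → ℝ) → ℝ := fun w => w ⬝ᵥ (C *ᵥ w) with hf
  have hcont : Continuous f := by
    have hfeq : f = fun w => ∑ i, w i * ∑ j, C i j * w j := rfl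
    rw [hfeq]
    exact continuous_finset_sum _ fun i _ => (continuous_apply i).mul
      (continuous_finset_sum _ fun j _ => continuous_const.mul (continuous_apply j))
  have hcont2 : Continuous fun w : Fin p → ℝ => w ⬝ᵥ w := by
    exact continuous_finset_sum _ fun i _ => (continuous_apply i).mul (continuous_apply i)
  set K : Set (Fin p → ℝ) := {w | w ⬝ᵥ w = 1} with hK
  have hKc : IsCompact K := by
    rw [Metric.isCompact_iff_isClosed_bounded]
    constructor
    · exact isClosed_eq hcont2 continuous_const
    · rw [Metric.isBounded_iff_subset_closedBall 0]
      refine ⟨1, fun w hw => ?_⟩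
      rw [Metric.mem_closedBall, dist_zero_right]
      rw [pi_norm_le_iff_of_nonneg zero_le_one]
      intro i
      rw [Real.norm_eq_abs, abs_le_one_iff_mul_self_le_one]
      calc w i * w i ≤ ∑ j, w j * w j :=
        Finset.single_le_sum (fun j _ => mul_self_nonneg (w j)) (Finset.mem_univ i)
      _ = 1 := hw
  have hKne : K.Nonempty := by
    refine ⟨fun i => if i = ⟨0, hp⟩ then 1 else 0, ?_⟩
    show (fun i : Fin p => if i = ⟨0, hp⟩ then (1:ℝ) else 0)
      ⬝ᵥ (fun i : Fin p => if i = ⟨0, hp⟩ then (1:ℝ) else 0) = 1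
    have hterm : ∀ i : Fin p, (if i = (⟨0, hp⟩ : Fin p) then (1:ℝ) else 0)
        * (if i = (⟨0, hp⟩ : Fin p) then (1:ℝ) else 0)
        = if i = (⟨0, hp⟩ : Fin p) then (1:ℝ) else 0 := fun i => by split <;> simp
    simp only [dotProduct, hterm]
    rw [Finset.sum_ite_eq', if_pos (Finset.mem_univ _)]
  obtain ⟨w₀, hw₀K, hw₀min⟩ := hKc.exists_isMinOn hKne hcont.continuousOn
  refine ⟨f w₀, ?_, fun w hw => hw₀min hw⟩
  have hw₀ne : w₀ ≠ 0 := by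
    intro h
    rw [hK] at hw₀K
    simp only [Set.mem_setOf_eq, h] at hw₀K
    simp at hw₀K
  have := hC.re_dotProduct_pos hw₀ne
  simpa [hf] using this

end Eig




section TraceAux

lemma trace_spectral_mul {p : ℕ} (c : Fin p → ℝ) (u : Fin p → Fin p → ℝ)
    (C : Matrix (Fin p) (Fin p) ℝ) :
    Matrix.trace ((∑ j, c j • vecMulVec (u j) (u j)) * C)
      = ∑ j, c j * (u j ⬝ᵥ (C *ᵥ u j)) := by
  rw [Finset.sum_mul, Matrix.trace_sum]
  refine Finset.sum_congr rfl fun j _ => ?_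
  rw [Matrix.smul_mul, Matrix.trace_smul, smul_eq_mul]
  congr 1
  simp only [Matrix.trace, Matrix.diag, Matrix.mul_apply, vecMulVec_apply, dotProduct,
    Matrix.mulVec, Finset.mul_sum]
  rw [Finset.sum_comm]
  exact Finset.sum_congr rfl fun k _ => Finset.sum_congr rfl fun i _ => by ring

lemma trace_mul_self_transpose {p q : ℕ} (N : Matrix (Fin p) (Fin q) ℝ) :
    Matrix.trace (N * Nᵀ) = ∑ i, ∑ k, N i k ^ 2 := by
  simp only [Matrix.trace, Matrix.diag, Matrix.mul_apply, Matrix.transpose_apply, sq]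

end TraceAux






section Helpers

lemma mulVec_dot' {p q : ℕ} (A : Matrix (Fin p) (Fin q) ℝ) (z : Fin q → ℝ) (y : Fin p → ℝ) :
    (A *ᵥ z) ⬝ᵥ y = z ⬝ᵥ (Aᵀ *ᵥ y) := by
  simp only [dotProduct, Matrix.mulVec, Matrix.transpose_apply, Finset.sum_mul, Finset.mul_sum]
  rw [Finset.sum_comm]
  exact Finset.sum_congr rfl fun i _ => Finset.sum_congr rfl fun j _ => by ring

lemma integral_sub_sq (μ : Measure ℝ) [IsProbabilityMeasure μ]
    (h1 : Integrable (fun x : ℝ => x) μ) (h2 : Integrable (fun x : ℝ => x ^ 2) μ)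
    (hm : ∫ x, x ∂μ = 0) (q : ℝ) :
    ∫ e, (q - e) ^ 2 ∂μ = q ^ 2 + ∫ x, x ^ 2 ∂μ := by
  have hrw : (fun e : ℝ => (q - e) ^ 2) = fun e => (q ^ 2 + (-2 * q) * e) + e ^ 2 :=
    funext fun e => by ring
  have hI1 : Integrable (fun e : ℝ => q ^ 2 + -2 * q * e) μ :=
    (integrable_const _).add (h1.const_mul _)
  have hI0 : Integrable (fun e : ℝ => -2 * q * e) μ := h1.const_mul _
  rw [hrw, integral_add hI1 h2, integral_add (integrable_const _) hI0, integral_const,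
    integral_const_mul, hm, probReal_univ]
  simp

end Helpers




-- main theorem body only; assumes all aux lemmas; will concatenate

theorem data_poisoning_attack_blows_up_ols_risk
    (n p : ℕ) (hn : 0 < n) (hnp : n < p)
    (X : Matrix (Fin n) (Fin p) ℝ) (hrank : X.rank = n)
    (β : Fin p → ℝ) (σ : ℝ) (hσ : 0 < σ)
    (Cxx Csqrt : Matrix (Fin p) (Fin p) ℝ)
    (hCxx : Cxx = Csqrt * Csqrtᵀ) (hCpd : Cxx.PosDef)
    -- the row space of X
    (S : Submodule ℝ (Fin p → ℝ))
    (hS : S = Submodule.span ℝ (Set.range fun i : Fin n => X i))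
    -- the adversarial sequence x₀^{(m)} = v + δ_m
    (v : Fin p → ℝ) (hv : v ∈ S)
    (δ : ℕ → Fin p → ℝ) (hδnot : ∀ m, δ m ∉ S)
    (hδ0 : Tendsto δ atTop (𝓝 0))
    -- the poisoned data matrices
    (Xt : ℕ → Matrix (Fin (n + 1)) (Fin p) ℝ)
    (hXt : ∀ m, Xt m = Matrix.of (Fin.snoc (fun i : Fin n => fun j => X i j) (v + δ m)))
    -- eigendecompositions of X̃_mᵀX̃_m, sorted decreasingly; since rank X̃_m = n+1, the
    -- eigenvalues at positions 1,…,n+1 are positive and the remaining ones vanish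
    (lams : ℕ → Fin p → ℝ) (us : ℕ → Fin p → Fin p → ℝ)
    (hlams_anti : ∀ m, ∀ i j : Fin p, i ≤ j → lams m j ≤ lams m i)
    (hus_orth : ∀ m, ∀ i j, us m i ⬝ᵥ us m j = if i = j then (1 : ℝ) else 0)
    (hdec : ∀ m, (Xt m)ᵀ * Xt m = ∑ j, lams m j • vecMulVec (us m j) (us m j))
    (hpos : ∀ m, ∀ i : Fin p, (i : ℕ) ≤ n → 0 < lams m i)
    (hzero : ∀ m, ∀ i : Fin p, n < (i : ℕ) → lams m i = 0)
    -- Moore–Penrose pseudoinverses of X̃_mᵀX̃_m and of X̃_m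
    (Dag2 : ℕ → Matrix (Fin p) (Fin p) ℝ)
    (hDag2 : ∀ m, IsMoorePenrose ((Xt m)ᵀ * Xt m) (Dag2 m))
    (Xdag : ℕ → Matrix (Fin p) (Fin (n + 1)) ℝ)
    (hXdag : ∀ m, IsMoorePenrose (Xt m) (Xdag m)) :
    -- the smallest nonzero eigenvalue of X̃_mᵀX̃_m tends to 0
    Tendsto (fun m => lams m ⟨n, hnp⟩) atTop (𝓝 0) ∧
    -- tr((X̃_mᵀX̃_m)^† C_xx) → ∞
    Tendsto (fun m => Matrix.trace (Dag2 m * Cxx)) atTop atTop ∧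
    -- the risk of the min-norm OLS estimator trained on the poisoned data → ∞
    Tendsto (fun m =>
        ∫ ε : Fin (n + 1) → ℝ,
          (∫ z : Fin p → ℝ,
            (∫ e : ℝ,
                ((Csqrt *ᵥ z) ⬝ᵥ (Xdag m *ᵥ (Xt m *ᵥ β + ε))
                  - ((Csqrt *ᵥ z) ⬝ᵥ β + e)) ^ 2
              ∂(gaussianReal 0 ⟨σ ^ 2, sq_nonneg σ⟩))
            ∂(Measure.pi fun _ : Fin p => gaussianReal 0 1))
          ∂(Measure.pi fun _ : Fin (n + 1) => gaussianReal 0 ⟨σ ^ 2, sq_nonneg σ⟩))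
      atTop atTop := by
  have hp0 : 0 < p := lt_of_le_of_lt (Nat.zero_le n) hnp
  set nn : Fin p := ⟨n, hnp⟩ with hnn
  -- ### Part 1
  have hpos_n : ∀ m, 0 < lams m nn := fun m => hpos m nn (le_refl n)
  have hle : ∀ m, lams m nn ≤ δ m ⬝ᵥ δ m := fun m =>
    smallest_nonzero_eig_le hnp X hrank v (δ m) (hS ▸ hv) (Xt m) (hXt m) (lams m) (us m)
      (hlams_anti m) (hus_orth m) (hdec m)
  have hδδ : Tendsto (fun m => δ m ⬝ᵥ δ m) atTop (𝓝 0) := by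
    have hcont : Continuous fun d : Fin p → ℝ => d ⬝ᵥ d :=
      continuous_finset_sum _ fun i _ => (continuous_apply i).mul (continuous_apply i)
    have h := (hcont.tendsto 0).comp hδ0
    simpa [Function.comp_def] using h
  have part1 : Tendsto (fun m => lams m nn) atTop (𝓝 0) :=
    squeeze_zero (fun m => (hpos_n m).le) hle hδδ
  -- ### identify the pseudoinverses
  have hDag2_eq : ∀ m, Dag2 m = ∑ j, (lams m j)⁻¹ • vecMulVec (us m j) (us m j) := by
    intro m
    have h1 := hDag2 m
    rw [hdec m] at h1
    exact isMoorePenrose_unique h1 (mp_spectral (lams m) (us m) (hus_orth m))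
  have hDag2_ddt : ∀ m, Dag2 m = Xdag m * (Xdag m)ᵀ := fun m =>
    isMoorePenrose_unique (hDag2 m) (mp_ddt (hXdag m))
  -- ### Part 2
  obtain ⟨mu, hmu, hmub⟩ := posdef_quadform_lb hp0 Cxx hCpd
  have hqf : ∀ m j, mu ≤ us m j ⬝ᵥ (Cxx *ᵥ us m j) := fun m j =>
    hmub _ (by simpa using hus_orth m j j)
  have htrace_ge : ∀ m, mu * (lams m nn)⁻¹ ≤ Matrix.trace (Dag2 m * Cxx) := by
    intro m
    rw [hDag2_eq m, trace_spectral_mul]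
    have hterm : ∀ j ∈ Finset.univ, 0 ≤ (lams m j)⁻¹ * (us m j ⬝ᵥ (Cxx *ᵥ us m j)) := by
      intro j _
      rcases le_or_gt (j : ℕ) n with h | h
      · exact mul_nonneg (inv_nonneg.mpr (hpos m j h).le) (le_trans hmu.le (hqf m j))
      · rw [hzero m j h]; simp
    calc mu * (lams m nn)⁻¹
        ≤ (lams m nn)⁻¹ * (us m nn ⬝ᵥ (Cxx *ᵥ us m nn)) := by
          rw [mul_comm]
          exact mul_le_mul_of_nonneg_left (hqf m nn) (inv_nonneg.mpr (hpos_n m).le)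
    _ ≤ ∑ j, (lams m j)⁻¹ * (us m j ⬝ᵥ (Cxx *ᵥ us m j)) :=
          Finset.single_le_sum hterm (Finset.mem_univ nn)
  have hinvT : Tendsto (fun m => (lams m nn)⁻¹) atTop atTop :=
    tendsto_inv_nhdsGT_zero.comp
      (tendsto_nhdsWithin_iff.mpr ⟨part1, Eventually.of_forall fun m => hpos_n m⟩)
  have part2 : Tendsto (fun m => Matrix.trace (Dag2 m * Cxx)) atTop atTop :=
    tendsto_atTop_mono htrace_ge (hinvT.const_mul_atTop hmu)
  -- ### Part 3
  have hσ2 : (⟨σ ^ 2, sq_nonneg σ⟩ : ℝ≥0) ≠ 0 := by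
    intro h
    have h2 : σ ^ 2 = 0 := congrArg NNReal.toReal h
    nlinarith
  set γσ : Measure ℝ := gaussianReal 0 ⟨σ ^ 2, sq_nonneg σ⟩ with hγσ
  haveI : IsProbabilityMeasure γσ := instIsProbabilityMeasureGaussianReal _ _
  have g1σ : Integrable (fun x : ℝ => x) γσ := integrable_id_gaussianReal hσ2
  have g2σ : Integrable (fun x : ℝ => x ^ 2) γσ := integrable_sq_gaussianReal hσ2
  have gmσ : ∫ x, x ∂γσ = 0 := gaussianReal_mean_zero _
  have g11 : Integrable (fun x : ℝ => x) (gaussianReal 0 1) :=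
    integrable_id_gaussianReal one_ne_zero
  have g21 : Integrable (fun x : ℝ => x ^ 2) (gaussianReal 0 1) :=
    integrable_sq_gaussianReal one_ne_zero
  have gm1 : ∫ x, x ∂(gaussianReal 0 1) = 0 := gaussianReal_mean_zero _
  set V1 : ℝ := ∫ x, x ^ 2 ∂(gaussianReal 0 1) with hV1def
  set Vσ : ℝ := ∫ x, x ^ 2 ∂γσ with hVσdef
  have hV1 : 0 < V1 := gaussianReal_var_pos one_ne_zero
  have hVσ : 0 < Vσ := gaussianReal_var_pos hσ2
  set M : ℕ → Matrix (Fin p) (Fin (n + 1)) ℝ := fun m => Csqrtᵀ * Xdag m with hM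
  set dvec : ℕ → Fin p → ℝ := fun m => Csqrtᵀ *ᵥ (Xdag m *ᵥ (Xt m *ᵥ β) - β) with hdvec
  -- rewrite the inner-most integral
  have hinner : ∀ q1 q2 : ℝ, (∫ e, (q1 - (q2 + e)) ^ 2 ∂γσ) = (q1 - q2) ^ 2 + Vσ := by
    intro q1 q2
    have h := integral_sub_sq γσ g1σ g2σ gmσ (q1 - q2)
    rw [← h]
    refine integral_congr_ae (Eventually.of_forall fun e => ?_)
    ring_nf
  -- the dot-product form of the inner linear term
  have hq : ∀ m (ε : Fin (n + 1) → ℝ) (z : Fin p → ℝ),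
      (Csqrt *ᵥ z) ⬝ᵥ (Xdag m *ᵥ (Xt m *ᵥ β + ε)) - (Csqrt *ᵥ z) ⬝ᵥ β
        = (fun i => dvec m i + (fun k => M m i k) ⬝ᵥ ε) ⬝ᵥ z := by
    intro m ε z
    rw [← dotProduct_sub, mulVec_dot', dotProduct_comm]
    congr 1
    have hsplit : Xdag m *ᵥ (Xt m *ᵥ β + ε) - β
        = (Xdag m *ᵥ (Xt m *ᵥ β) - β) + Xdag m *ᵥ ε := by
      rw [Matrix.mulVec_add]; ring
    rw [hsplit, Matrix.mulVec_add, Matrix.mulVec_mulVec ε Csqrtᵀ (Xdag m)]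
    funext i
    simp only [Pi.add_apply, hdvec, hM]
    rfl
  -- middle integral
  have hmid : ∀ avec : Fin p → ℝ,
      (∫ z : Fin p → ℝ, ((avec ⬝ᵥ z) ^ 2 + Vσ)
          ∂(Measure.pi fun _ : Fin p => gaussianReal 0 1))
        = V1 * ∑ i, avec i ^ 2 + Vσ := by
    intro avec
    obtain ⟨hint, hval⟩ := pi_dot_sq_integral (gaussianReal 0 1) g11 g21 gm1 0 avec
    simp only [zero_add] at hint hval
    rw [integral_add hint (integrable_const _), integral_const, probReal_univ, hval]
    simp [hV1def]
  -- the exact value of the risk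
  have key : ∀ m,
      (∫ ε : Fin (n + 1) → ℝ,
          (∫ z : Fin p → ℝ,
            (∫ e : ℝ,
                ((Csqrt *ᵥ z) ⬝ᵥ (Xdag m *ᵥ (Xt m *ᵥ β + ε))
                  - ((Csqrt *ᵥ z) ⬝ᵥ β + e)) ^ 2
              ∂(gaussianReal 0 ⟨σ ^ 2, sq_nonneg σ⟩))
            ∂(Measure.pi fun _ : Fin p => gaussianReal 0 1))
          ∂(Measure.pi fun _ : Fin (n + 1) => gaussianReal 0 ⟨σ ^ 2, sq_nonneg σ⟩))
        = V1 * (∑ i, ((dvec m i) ^ 2 + Vσ * ∑ k, (M m i k) ^ 2)) + Vσ := by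
    intro m
    have hz : ∀ ε : Fin (n + 1) → ℝ,
        (∫ z : Fin p → ℝ,
            (∫ e : ℝ,
                ((Csqrt *ᵥ z) ⬝ᵥ (Xdag m *ᵥ (Xt m *ᵥ β + ε))
                  - ((Csqrt *ᵥ z) ⬝ᵥ β + e)) ^ 2
              ∂(gaussianReal 0 ⟨σ ^ 2, sq_nonneg σ⟩))
            ∂(Measure.pi fun _ : Fin p => gaussianReal 0 1))
          = V1 * ∑ i, (dvec m i + (fun k => M m i k) ⬝ᵥ ε) ^ 2 + Vσ := by
      intro ε
      have e1 : (∫ z : Fin p → ℝ,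
          (∫ e : ℝ,
              ((Csqrt *ᵥ z) ⬝ᵥ (Xdag m *ᵥ (Xt m *ᵥ β + ε))
                - ((Csqrt *ᵥ z) ⬝ᵥ β + e)) ^ 2
            ∂(gaussianReal 0 ⟨σ ^ 2, sq_nonneg σ⟩))
          ∂(Measure.pi fun _ : Fin p => gaussianReal 0 1))
          = ∫ z : Fin p → ℝ,
              (((fun i => dvec m i + (fun k => M m i k) ⬝ᵥ ε) ⬝ᵥ z) ^ 2 + Vσ)
            ∂(Measure.pi fun _ : Fin p => gaussianReal 0 1) := by
        refine integral_congr_ae (Eventually.of_forall fun z => ?_)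
        have h1 := hinner ((Csqrt *ᵥ z) ⬝ᵥ (Xdag m *ᵥ (Xt m *ᵥ β + ε))) ((Csqrt *ᵥ z) ⬝ᵥ β)
        rw [hq m ε z] at h1
        exact h1
      rw [e1, hmid]
    calc (∫ ε : Fin (n + 1) → ℝ,
          (∫ z : Fin p → ℝ,
            (∫ e : ℝ,
                ((Csqrt *ᵥ z) ⬝ᵥ (Xdag m *ᵥ (Xt m *ᵥ β + ε))
                  - ((Csqrt *ᵥ z) ⬝ᵥ β + e)) ^ 2
              ∂(gaussianReal 0 ⟨σ ^ 2, sq_nonneg σ⟩))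
            ∂(Measure.pi fun _ : Fin p => gaussianReal 0 1))
          ∂(Measure.pi fun _ : Fin (n + 1) => gaussianReal 0 ⟨σ ^ 2, sq_nonneg σ⟩))
        = ∫ ε : Fin (n + 1) → ℝ,
            (V1 * ∑ i, (dvec m i + (fun k => M m i k) ⬝ᵥ ε) ^ 2 + Vσ)
          ∂(Measure.pi fun _ : Fin (n + 1) => gaussianReal 0 ⟨σ ^ 2, sq_nonneg σ⟩) :=
          integral_congr_ae (Eventually.of_forall hz)
    _ = V1 * (∑ i, ((dvec m i) ^ 2 + Vσ * ∑ k, (M m i k) ^ 2)) + Vσ := by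
        have hint_i : ∀ i : Fin p,
            Integrable (fun ε : Fin (n + 1) → ℝ => (dvec m i + (fun k => M m i k) ⬝ᵥ ε) ^ 2)
              (Measure.pi fun _ : Fin (n + 1) => gaussianReal 0 ⟨σ ^ 2, sq_nonneg σ⟩) :=
          fun i => (pi_dot_sq_integral _ g1σ g2σ gmσ (dvec m i) (fun k => M m i k)).1
        have hIsum : Integrable (fun ε : Fin (n + 1) → ℝ =>
            V1 * ∑ i, (dvec m i + (fun k => M m i k) ⬝ᵥ ε) ^ 2)
              (Measure.pi fun _ : Fin (n + 1) => gaussianReal 0 ⟨σ ^ 2, sq_nonneg σ⟩) :=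
          (integrable_finset_sum _ fun i _ => hint_i i).const_mul V1
        rw [integral_add hIsum (integrable_const _), integral_const, probReal_univ,
          integral_const_mul, integral_finset_sum _ (fun i _ => hint_i i)]
        have hvals : ∀ i ∈ Finset.univ, (∫ ε : Fin (n + 1) → ℝ,
            (dvec m i + (fun k => M m i k) ⬝ᵥ ε) ^ 2
              ∂(Measure.pi fun _ : Fin (n + 1) => gaussianReal 0 ⟨σ ^ 2, sq_nonneg σ⟩))
            = (dvec m i) ^ 2 + Vσ * ∑ k, (M m i k) ^ 2 :=
          fun i _ => (pi_dot_sq_integral _ g1σ g2σ gmσ (dvec m i) (fun k => M m i k)).2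
        rw [Finset.sum_congr rfl hvals]
        simp
  -- trace identity
  have htr : ∀ m, Matrix.trace (Dag2 m * Cxx) = ∑ i, ∑ k, (M m) i k ^ 2 := by
    intro m
    rw [hDag2_ddt m, hCxx, ← trace_mul_self_transpose (M m)]
    calc Matrix.trace (Xdag m * (Xdag m)ᵀ * (Csqrt * Csqrtᵀ))
        = Matrix.trace (Xdag m * (Xdag m)ᵀ * Csqrt * Csqrtᵀ) := by
          rw [← Matrix.mul_assoc (Xdag m * (Xdag m)ᵀ) Csqrt Csqrtᵀ]
    _ = Matrix.trace (Csqrtᵀ * (Xdag m * (Xdag m)ᵀ * Csqrt)) := Matrix.trace_mul_comm _ _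
    _ = Matrix.trace (M m * (M m)ᵀ) := by
        rw [hM]
        congr 1
        simp only [Matrix.transpose_mul, Matrix.transpose_transpose, Matrix.mul_assoc]
  -- lower bound for the risk
  have hge : ∀ m, V1 * Vσ * Matrix.trace (Dag2 m * Cxx) ≤
      (∫ ε : Fin (n + 1) → ℝ,
          (∫ z : Fin p → ℝ,
            (∫ e : ℝ,
                ((Csqrt *ᵥ z) ⬝ᵥ (Xdag m *ᵥ (Xt m *ᵥ β + ε))
                  - ((Csqrt *ᵥ z) ⬝ᵥ β + e)) ^ 2
              ∂(gaussianReal 0 ⟨σ ^ 2, sq_nonneg σ⟩))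
            ∂(Measure.pi fun _ : Fin p => gaussianReal 0 1))
          ∂(Measure.pi fun _ : Fin (n + 1) => gaussianReal 0 ⟨σ ^ 2, sq_nonneg σ⟩)) := by
    intro m
    rw [key m, htr m]
    have hSd : 0 ≤ ∑ i, (dvec m i) ^ 2 := Finset.sum_nonneg fun i _ => sq_nonneg _
    have hsplit : ∑ i, ((dvec m i) ^ 2 + Vσ * ∑ k, (M m i k) ^ 2)
        = (∑ i, (dvec m i) ^ 2) + Vσ * ∑ i, ∑ k, (M m i k) ^ 2 := by
      rw [Finset.sum_add_distrib, ← Finset.mul_sum]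
    rw [hsplit]
    nlinarith [mul_nonneg hV1.le hSd, hVσ.le]
  exact ⟨part1, part2, tendsto_atTop_mono hge (part2.const_mul_atTop (mul_pos hV1 hVσ))⟩
end

section
/- Let X ∈ ℝ^{n×p} and x₀ ∈ ℝ^p with ‖x₀‖ ≤ ε, and let X̃ ∈ ℝ^{(n+1)×p} be X with the row x₀ᵀ appended, so X̃ᵀX̃ = XᵀX + x₀x₀ᵀ. Then for every i, λᵢ(XᵀX) ≤ λᵢ(X̃ᵀX̃) ≤ λᵢ(XᵀX) + ε², where λᵢ(M) denotes the i-th largest eigenvalue. Consequently, for k ≤ min(n,p) with λ_k(XᵀX) > 0 and any symmetric positive semidefinite C_xx with largest eigenvalue λ₁(C_xx), the PCA-OLS variance trace on the poisoned data satisfies tr((X̃_{PCA,k}ᵀX̃_{PCA,k})^† C_xx) ≤ k λ₁(C_xx)/λ_k(XᵀX). -/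
/- STATEMENT 14: Let X ∈ ℝ^{n×p}, x₀ ∈ ℝ^p with ‖x₀‖ ≤ ε, and X̃ be X with the row x₀ᵀ
appended, so X̃ᵀX̃ = XᵀX + x₀x₀ᵀ. Then λᵢ(XᵀX) ≤ λᵢ(X̃ᵀX̃) ≤ λᵢ(XᵀX) + ε² for every i.
Consequently, for k ≤ min(n,p) with λ_k(XᵀX) > 0 and any symmetric PSD C_xx with largest
eigenvalue λ₁(C_xx), the PCA-OLS variance trace on the poisoned data satisfies
tr((X̃_{PCA,k}ᵀX̃_{PCA,k})^† C_xx) ≤ k λ₁(C_xx)/λ_k(XᵀX). -/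

open Matrix
open scoped BigOperators

namespace PoisonAux
variable {p : ℕ}

/-- dot product with a fixed vector, as a linear map -/
def dotL (a : Fin p → ℝ) : (Fin p → ℝ) →ₗ[ℝ] ℝ where
  toFun x := a ⬝ᵥ x
  map_add' u v := dotProduct_add a u v
  map_smul' c u := by simp

lemma vecMulVec_mulVec (a b x : Fin p → ℝ) :
    vecMulVec a b *ᵥ x = (b ⬝ᵥ x) • a := by
  ext s
  simp only [Matrix.mulVec, Matrix.vecMulVec_apply, dotProduct, Pi.smul_apply, smul_eq_mul,
    Finset.sum_mul]
  exact Finset.sum_congr rfl fun t _ => by ring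

lemma vecMulVec_mul_vecMulVec (a b c d : Fin p → ℝ) :
    vecMulVec a b * vecMulVec c d = (b ⬝ᵥ c) • vecMulVec a d := by
  ext s t
  simp only [Matrix.mul_apply, Matrix.vecMulVec_apply, Matrix.smul_apply, smul_eq_mul, dotProduct,
    Finset.sum_mul]
  exact Finset.sum_congr rfl fun m _ => by ring

/-- Parseval for an orthonormal family of p vectors in ℝ^p -/
lemma parseval (a : Fin p → Fin p → ℝ)
    (ha : ∀ i j, a i ⬝ᵥ a j = if i = j then (1:ℝ) else 0) (x : Fin p → ℝ) :
    ∑ j, (a j ⬝ᵥ x)^2 = x ⬝ᵥ x := by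
  have h1 : (Matrix.of a) * (Matrix.of a)ᵀ = 1 := by
    ext i j
    simpa [Matrix.mul_apply, Matrix.one_apply, dotProduct] using ha i j
  have h2 := mul_eq_one_comm.mp h1
  have h3 : ∀ s t : Fin p, ∑ j, a j s * a j t = if s = t then (1:ℝ) else 0 := by
    intro s t
    have := congrFun (congrFun h2 s) t
    simpa [Matrix.mul_apply, Matrix.one_apply, Matrix.transpose_apply] using this
  have expand : ∀ j, (a j ⬝ᵥ x)^2 = ∑ s, ∑ t, (x s * x t) * (a j s * a j t) := by
    intro j
    rw [sq, dotProduct, Finset.sum_mul_sum]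
    exact Finset.sum_congr rfl fun s _ => Finset.sum_congr rfl fun t _ => by ring
  calc ∑ j, (a j ⬝ᵥ x)^2 = ∑ j, ∑ s, ∑ t, (x s * x t) * (a j s * a j t) :=
        Finset.sum_congr rfl fun j _ => expand j
    _ = ∑ s, ∑ t, ∑ j, (x s * x t) * (a j s * a j t) := by
        rw [Finset.sum_comm]
        exact Finset.sum_congr rfl fun s _ => Finset.sum_comm
    _ = ∑ s, ∑ t, (x s * x t) * (if s = t then (1:ℝ) else 0) := by
        refine Finset.sum_congr rfl fun s _ => Finset.sum_congr rfl fun t _ => ?_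
        rw [← Finset.mul_sum, h3]
    _ = x ⬝ᵥ x := by
        simp [dotProduct, mul_ite, Finset.sum_ite_eq]

lemma quad_form (c : Fin p → ℝ) (a : Fin p → Fin p → ℝ) (x : Fin p → ℝ) :
    x ⬝ᵥ ((∑ j, c j • vecMulVec (a j) (a j)) *ᵥ x) = ∑ j, c j * (a j ⬝ᵥ x)^2 := by
  rw [show ((∑ j, c j • vecMulVec (a j) (a j)) *ᵥ x) = ∑ j, (c j • vecMulVec (a j) (a j)) *ᵥ x from map_sum (Matrix.mulVec.addMonoidHomLeft x) _ _,
    show x ⬝ᵥ (∑ j, (c j • vecMulVec (a j) (a j)) *ᵥ x) = ∑ j, x ⬝ᵥ ((c j • vecMulVec (a j) (a j)) *ᵥ x) from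
      map_sum ((dotL x)) _ _]
  refine Finset.sum_congr rfl fun j _ => ?_
  rw [Matrix.smul_mulVec, vecMulVec_mulVec]
  simp only [dotProduct_smul, smul_eq_mul, dotProduct_comm x (a j), sq]

lemma orth_li (a : Fin p → Fin p → ℝ)
    (ha : ∀ i j, a i ⬝ᵥ a j = if i = j then (1:ℝ) else 0) :
    LinearIndependent ℝ a := by
  rw [Fintype.linearIndependent_iff]
  intro g hg i
  have h0 : dotL (a i) (∑ j, g j • a j) = 0 := by rw [hg]; simp [dotL]
  rw [map_sum] at h0
  simpa [dotL, dotProduct_smul, ha i, eq_comm] using h0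

lemma exists_common (a b : Fin p → Fin p → ℝ)
    (ha : ∀ i j, a i ⬝ᵥ a j = if i = j then (1:ℝ) else 0)
    (hb : ∀ i j, b i ⬝ᵥ b j = if i = j then (1:ℝ) else 0) (i : Fin p) :
    ∃ x : Fin p → ℝ, x ≠ 0 ∧ (∀ l, i < l → a l ⬝ᵥ x = 0) ∧ (∀ l, l < i → b l ⬝ᵥ x = 0) := by
  have hip : (i : ℕ) + 1 ≤ p := i.isLt
  set f : Fin ((i : ℕ) + 1) → (Fin p → ℝ) := fun j => a (Fin.castLE hip j) with hf
  set g : Fin (p - (i : ℕ)) → (Fin p → ℝ) := fun j => b ⟨(i : ℕ) + (j : ℕ), by omega⟩ with hg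
  have hfi : LinearIndependent ℝ f :=
    (orth_li a ha).comp _ (Fin.castLE_injective hip)
  have hgi : LinearIndependent ℝ g :=
    (orth_li b hb).comp _ (fun x y h => by
      have := congrArg Fin.val h
      simp at this
      exact Fin.ext (by omega))
  set S := Submodule.span ℝ (Set.range f) with hS
  set T := Submodule.span ℝ (Set.range g) with hT
  have hdS : Module.finrank ℝ S = (i : ℕ) + 1 := by
    rw [hS, finrank_span_eq_card hfi]; simp
  have hdT : Module.finrank ℝ T = p - (i : ℕ) := by
    rw [hT, finrank_span_eq_card hgi]; simp
  have hsum := Submodule.finrank_sup_add_finrank_inf_eq S T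
  have hle : Module.finrank ℝ ↥(S ⊔ T) ≤ p := by
    have := Submodule.finrank_le (S ⊔ T)
    simpa [Module.finrank_pi] using this
  have hpos : Module.finrank ℝ ↥(S ⊓ T) ≠ 0 := by omega
  have hne : S ⊓ T ≠ ⊥ := by
    intro hbot
    apply hpos
    rw [hbot]
    simp
  obtain ⟨x, hx, hx0⟩ := Submodule.exists_mem_ne_zero_of_ne_bot hne
  refine ⟨x, hx0, ?_, ?_⟩
  · intro l hl
    have hxS : x ∈ S := hx.1
    have : S ≤ LinearMap.ker (dotL (a l)) := by
      rw [hS, Submodule.span_le]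
      rintro _ ⟨j, rfl⟩
      simp only [SetLike.mem_coe, LinearMap.mem_ker]
      have hne2 : l ≠ Fin.castLE hip j := by
        intro h
        have h1 : (l : ℕ) = (j : ℕ) := by rw [h]; rfl
        have h2 : (i : ℕ) < (l : ℕ) := Fin.lt_def.mp hl
        have h3 : (j : ℕ) < (i : ℕ) + 1 := j.isLt
        omega
      simpa [dotL, hf, ha l (Fin.castLE hip j), hne2] using rfl
    simpa [dotL] using this hxS
  · intro l hl
    have hxT : x ∈ T := hx.2
    have : T ≤ LinearMap.ker (dotL (b l)) := by
      rw [hT, Submodule.span_le]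
      rintro _ ⟨j, rfl⟩
      simp only [SetLike.mem_coe, LinearMap.mem_ker]
      have hne2 : l ≠ (⟨(i : ℕ) + (j : ℕ), by omega⟩ : Fin p) := by
        intro h
        have h1 : (l : ℕ) = (i : ℕ) + (j : ℕ) := by rw [h]
        have h2 : (l : ℕ) < (i : ℕ) := Fin.lt_def.mp hl
        omega
      simpa [dotL, hg, hb l, hne2] using rfl
    simpa [dotL] using this hxT

lemma sum_lb (c v : Fin p → ℝ) (i : Fin p) (hc : ∀ l, l ≤ i → c i ≤ c l)
    (hv : ∀ l, i < l → v l = 0) : c i * ∑ j, (v j)^2 ≤ ∑ j, c j * (v j)^2 := by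
  rw [Finset.mul_sum]
  refine Finset.sum_le_sum fun j _ => ?_
  rcases le_or_gt j i with h | h
  · exact mul_le_mul_of_nonneg_right (hc j h) (sq_nonneg _)
  · rw [hv j h]; simp

lemma sum_ub (c v : Fin p → ℝ) (i : Fin p) (hc : ∀ l, i ≤ l → c l ≤ c i)
    (hv : ∀ l, l < i → v l = 0) : ∑ j, c j * (v j)^2 ≤ c i * ∑ j, (v j)^2 := by
  rw [Finset.mul_sum]
  refine Finset.sum_le_sum fun j _ => ?_
  rcases le_or_gt i j with h | h
  · exact mul_le_mul_of_nonneg_right (hc j h) (sq_nonneg _)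
  · rw [hv j h]; simp

lemma dot_self_pos {x : Fin p → ℝ} (hx : x ≠ 0) : 0 < x ⬝ᵥ x := by
  have h0 : (0:ℝ) ≤ x ⬝ᵥ x := Finset.sum_nonneg fun s _ => mul_self_nonneg _
  rcases h0.lt_or_eq with h | h
  · exact h
  · exact absurd ((dotProduct_self_eq_zero).mp h.symm) hx

lemma mp_unique {m n : Type*} [Fintype m] [Fintype n] {A : Matrix m n ℝ}
    {P Q : Matrix n m ℝ} (hP : IsMoorePenrose A P) (hQ : IsMoorePenrose A Q) : P = Q := by
  obtain ⟨hP1, hP2, hP3, hP4⟩ := hP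
  obtain ⟨hQ1, hQ2, hQ3, hQ4⟩ := hQ
  have hAt : Aᵀ = Aᵀ * (Qᵀ * Aᵀ) := by
    calc Aᵀ = (A * Q * A)ᵀ := by rw [hQ1]
      _ = Aᵀ * (A * Q)ᵀ := Matrix.transpose_mul _ _
      _ = Aᵀ * (Qᵀ * Aᵀ) := by rw [Matrix.transpose_mul A Q]
  have hAP : A * P = A * P * (A * Q) := by
    calc A * P = (A * P)ᵀ := hP3.symm
      _ = Pᵀ * Aᵀ := Matrix.transpose_mul _ _
      _ = Pᵀ * (Aᵀ * (Qᵀ * Aᵀ)) := by rw [← hAt]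
      _ = (Pᵀ * Aᵀ) * (Qᵀ * Aᵀ) := by rw [Matrix.mul_assoc]
      _ = A * P * (A * Q) := by
            rw [← Matrix.transpose_mul A P, ← Matrix.transpose_mul A Q, hP3, hQ3]
  have hPA : P * A = Q * A * (P * A) := by
    have hAt2 : Aᵀ = (Aᵀ * Qᵀ) * Aᵀ := by rw [Matrix.mul_assoc]; exact hAt
    calc P * A = (P * A)ᵀ := hP4.symm
      _ = Aᵀ * Pᵀ := Matrix.transpose_mul _ _
      _ = ((Aᵀ * Qᵀ) * Aᵀ) * Pᵀ := by rw [← hAt2]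
      _ = (Aᵀ * Qᵀ) * (Aᵀ * Pᵀ) := by rw [Matrix.mul_assoc]
      _ = Q * A * (P * A) := by
            rw [← Matrix.transpose_mul Q A, ← Matrix.transpose_mul P A, hP4, hQ4]
  calc P = P * A * P := hP2.symm
    _ = P * (A * P) := by rw [Matrix.mul_assoc]
    _ = P * (A * P * (A * Q)) := by rw [← hAP]
    _ = (P * A * P) * (A * Q) := by simp only [Matrix.mul_assoc]
    _ = P * (A * Q) := by rw [hP2]
    _ = P * A * Q := by rw [Matrix.mul_assoc]
    _ = (Q * A * (P * A)) * Q := by rw [← hPA]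
    _ = Q * ((A * P * A) * Q) := by simp only [Matrix.mul_assoc]
    _ = Q * (A * Q) := by rw [hP1]
    _ = Q * A * Q := by rw [Matrix.mul_assoc]
    _ = Q := hQ2

lemma mulWW (wt : Fin p → Fin p → ℝ)
    (hwt : ∀ i j, wt i ⬝ᵥ wt j = if i = j then (1:ℝ) else 0)
    (F : Finset (Fin p)) (c d : Fin p → ℝ) :
    (∑ i ∈ F, c i • vecMulVec (wt i) (wt i)) * (∑ j ∈ F, d j • vecMulVec (wt j) (wt j))
      = ∑ i ∈ F, (c i * d i) • vecMulVec (wt i) (wt i) := by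
  rw [Finset.sum_mul]
  refine Finset.sum_congr rfl fun i hi => ?_
  rw [Finset.mul_sum]
  have hterm : ∀ j ∈ F, (c i • vecMulVec (wt i) (wt i)) * (d j • vecMulVec (wt j) (wt j))
      = if j = i then (c i * d i) • vecMulVec (wt i) (wt i) else 0 := by
    intro j _
    rw [Matrix.smul_mul, Matrix.mul_smul, vecMulVec_mul_vecMulVec, hwt i j]
    by_cases h : i = j
    · subst h; simp [smul_smul, mul_comm]
    · simp [h, Ne.symm h]
  rw [Finset.sum_congr rfl hterm, Finset.sum_ite_eq' F i
    (fun _ => (c i * d i) • vecMulVec (wt i) (wt i)), if_pos hi]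

lemma trace_vmv_mul (a : Fin p → ℝ) (C : Matrix (Fin p) (Fin p) ℝ) :
    Matrix.trace (vecMulVec a a * C) = a ⬝ᵥ (C *ᵥ a) := by
  simp only [Matrix.trace, Matrix.diag_apply, Matrix.mul_apply, Matrix.vecMulVec_apply,
    dotProduct, Matrix.mulVec, Finset.mul_sum]
  rw [Finset.sum_comm]
  exact Finset.sum_congr rfl fun m _ => Finset.sum_congr rfl fun s _ => by ring

lemma card_filter_lt (k : ℕ) (hkp : k ≤ p) :
    (Finset.univ.filter (fun i : Fin p => (i : ℕ) < k)).card = k := by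
  have himg : (Finset.univ.filter (fun i : Fin p => (i : ℕ) < k)).image Fin.val
      = Finset.range k := by
    ext m
    simp only [Finset.mem_image, Finset.mem_filter, Finset.mem_univ, true_and, Finset.mem_range]
    constructor
    · rintro ⟨i, hi, rfl⟩; exact hi
    · intro hm; exact ⟨⟨m, lt_of_lt_of_le hm hkp⟩, hm, rfl⟩
  rw [← Finset.card_image_of_injective _ Fin.val_injective, himg, Finset.card_range]

end PoisonAux

theorem poisoned_eigenvalue_interlacing_and_pca_robustness
    (n p k : ℕ) (hk0 : 0 < k) (hk : k ≤ min n p)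
    (X : Matrix (Fin n) (Fin p) ℝ)
    (x0 : Fin p → ℝ) (ε : ℝ) (hε : 0 ≤ ε) (hx0 : ∑ i, x0 i ^ 2 ≤ ε ^ 2)
    -- the poisoned data matrix: X with the row x₀ᵀ appended
    (Xt : Matrix (Fin (n + 1)) (Fin p) ℝ)
    (hXt : Xt = Matrix.of (Fin.snoc (fun i : Fin n => fun j => X i j) x0))
    -- eigendecomposition of XᵀX, eigenvalues sorted decreasingly
    (mu : Fin p → ℝ) (w : Fin p → Fin p → ℝ)
    (hmu_anti : ∀ i j : Fin p, i ≤ j → mu j ≤ mu i)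
    (hw_orth : ∀ i j, w i ⬝ᵥ w j = if i = j then (1 : ℝ) else 0)
    (hXX : Xᵀ * X = ∑ j, mu j • vecMulVec (w j) (w j))
    -- eigendecomposition of X̃ᵀX̃, eigenvalues sorted decreasingly
    (nu : Fin p → ℝ) (wt : Fin p → Fin p → ℝ)
    (hmut_anti : ∀ i j : Fin p, i ≤ j → nu j ≤ nu i)
    (hwt_orth : ∀ i j, wt i ⬝ᵥ wt j = if i = j then (1 : ℝ) else 0)
    (hXtXt : Xtᵀ * Xt = ∑ j, nu j • vecMulVec (wt j) (wt j))
    -- λ_k(XᵀX) > 0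
    (hmuk : 0 < mu ⟨k - 1, by omega⟩)
    -- eigendecomposition of C_xx, symmetric PSD, eigenvalues sorted decreasingly
    (Cxx : Matrix (Fin p) (Fin p) ℝ)
    (lam : Fin p → ℝ) (u : Fin p → Fin p → ℝ)
    (hlam_anti : ∀ i j : Fin p, i ≤ j → lam j ≤ lam i)
    (hlam_nonneg : ∀ j, 0 ≤ lam j)
    (hu_orth : ∀ i j, u i ⬝ᵥ u j = if i = j then (1 : ℝ) else 0)
    (hCdec : Cxx = ∑ j, lam j • vecMulVec (u j) (u j))
    -- the pseudoinverse of X̃_{PCA,k}ᵀ X̃_{PCA,k}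
    (Bdag : Matrix (Fin p) (Fin p) ℝ)
    (hBdag : IsMoorePenrose
      (∑ i ∈ Finset.univ.filter (fun i : Fin p => (i : ℕ) < k), nu i • vecMulVec (wt i) (wt i))
      Bdag) :
    (∀ i : Fin p, mu i ≤ nu i ∧ nu i ≤ mu i + ε ^ 2) ∧
      Matrix.trace (Bdag * Cxx) ≤ (k : ℝ) * lam ⟨0, by omega⟩ / mu ⟨k - 1, by omega⟩ := by
  have hkp : k ≤ p := le_trans hk (min_le_right n p)
  have hkn : k ≤ n := le_trans hk (min_le_left n p)
  have hp0 : 0 < p := lt_of_lt_of_le hk0 hkp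
  -- the key matrix identity
  have key : Xtᵀ * Xt = Xᵀ * X + vecMulVec x0 x0 := by
    subst hXt
    ext s t
    simp [Matrix.mul_apply, Matrix.transpose_apply, Fin.sum_univ_castSucc,
      Matrix.vecMulVec_apply, Fin.snoc_castSucc, Fin.snoc_last]
  -- quadratic form relation
  have hq : ∀ x : Fin p → ℝ,
      ∑ j, nu j * (wt j ⬝ᵥ x)^2 = ∑ j, mu j * (w j ⬝ᵥ x)^2 + (x0 ⬝ᵥ x)^2 := by
    intro x
    have h1 : x ⬝ᵥ ((Xtᵀ * Xt) *ᵥ x) = x ⬝ᵥ ((Xᵀ * X) *ᵥ x) + (x0 ⬝ᵥ x)^2 := by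
      rw [key, Matrix.add_mulVec, dotProduct_add, PoisonAux.vecMulVec_mulVec]
      simp only [dotProduct_smul, smul_eq_mul, dotProduct_comm x x0, sq]
    rw [hXtXt, hXX] at h1
    rw [PoisonAux.quad_form, PoisonAux.quad_form] at h1
    exact h1
  -- Part 1
  have part1 : ∀ i : Fin p, mu i ≤ nu i ∧ nu i ≤ mu i + ε ^ 2 := by
    intro i
    constructor
    · obtain ⟨x, hxne, hva, hvb⟩ := PoisonAux.exists_common w wt hw_orth hwt_orth i
      have hs : 0 < x ⬝ᵥ x := PoisonAux.dot_self_pos hxne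
      have h1 : mu i * (x ⬝ᵥ x) ≤ ∑ j, mu j * (w j ⬝ᵥ x)^2 := by
        have := PoisonAux.sum_lb mu (fun j => w j ⬝ᵥ x) i
          (fun l hl => hmu_anti l i hl) hva
        rwa [PoisonAux.parseval w hw_orth x] at this
      have h2 : ∑ j, nu j * (wt j ⬝ᵥ x)^2 ≤ nu i * (x ⬝ᵥ x) := by
        have := PoisonAux.sum_ub nu (fun j => wt j ⬝ᵥ x) i
          (fun l hl => hmut_anti i l hl) hvb
        rwa [PoisonAux.parseval wt hwt_orth x] at this
      have h3 : mu i * (x ⬝ᵥ x) ≤ nu i * (x ⬝ᵥ x) := by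
        calc mu i * (x ⬝ᵥ x) ≤ ∑ j, mu j * (w j ⬝ᵥ x)^2 := h1
          _ ≤ ∑ j, mu j * (w j ⬝ᵥ x)^2 + (x0 ⬝ᵥ x)^2 := le_add_of_nonneg_right (sq_nonneg _)
          _ = ∑ j, nu j * (wt j ⬝ᵥ x)^2 := (hq x).symm
          _ ≤ nu i * (x ⬝ᵥ x) := h2
      exact le_of_mul_le_mul_right h3 hs
    · obtain ⟨x, hxne, hva, hvb⟩ := PoisonAux.exists_common wt w hwt_orth hw_orth i
      have hs : 0 < x ⬝ᵥ x := PoisonAux.dot_self_pos hxne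
      have h1 : nu i * (x ⬝ᵥ x) ≤ ∑ j, nu j * (wt j ⬝ᵥ x)^2 := by
        have := PoisonAux.sum_lb nu (fun j => wt j ⬝ᵥ x) i
          (fun l hl => hmut_anti l i hl) hva
        rwa [PoisonAux.parseval wt hwt_orth x] at this
      have h2 : ∑ j, mu j * (w j ⬝ᵥ x)^2 ≤ mu i * (x ⬝ᵥ x) := by
        have := PoisonAux.sum_ub mu (fun j => w j ⬝ᵥ x) i
          (fun l hl => hmu_anti i l hl) hvb
        rwa [PoisonAux.parseval w hw_orth x] at this
      have hcs : (x0 ⬝ᵥ x)^2 ≤ ε^2 * (x ⬝ᵥ x) := by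
        have h4 : (∑ s, x0 s * x s)^2 ≤ (∑ s, (x0 s)^2) * (∑ s, (x s)^2) :=
          Finset.sum_mul_sq_le_sq_mul_sq Finset.univ x0 x
        have h5 : (∑ s : Fin p, (x s)^2) = x ⬝ᵥ x := by
          simp [dotProduct, sq]
        calc (x0 ⬝ᵥ x)^2 = (∑ s, x0 s * x s)^2 := rfl
          _ ≤ (∑ s, (x0 s)^2) * (∑ s, (x s)^2) := h4
          _ ≤ ε^2 * (x ⬝ᵥ x) := by
              rw [h5]
              exact mul_le_mul_of_nonneg_right hx0 hs.le
      have h3 : nu i * (x ⬝ᵥ x) ≤ (mu i + ε^2) * (x ⬝ᵥ x) := by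
        calc nu i * (x ⬝ᵥ x) ≤ ∑ j, nu j * (wt j ⬝ᵥ x)^2 := h1
          _ = ∑ j, mu j * (w j ⬝ᵥ x)^2 + (x0 ⬝ᵥ x)^2 := hq x
          _ ≤ mu i * (x ⬝ᵥ x) + ε^2 * (x ⬝ᵥ x) := add_le_add h2 hcs
          _ = (mu i + ε^2) * (x ⬝ᵥ x) := by ring
      exact le_of_mul_le_mul_right h3 hs
  refine ⟨part1, ?_⟩
  -- Part 2
  set F := Finset.univ.filter (fun i : Fin p => (i : ℕ) < k) with hF
  set km : Fin p := ⟨k - 1, by omega⟩ with hkm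
  -- positivity of nu on F
  have hmuF : ∀ i ∈ F, mu km ≤ mu i := by
    intro i hi
    have hik : (i : ℕ) < k := (Finset.mem_filter.mp hi).2
    exact hmu_anti i km (by rw [Fin.le_def]; simp [hkm]; omega)
  have hnuF : ∀ i ∈ F, mu km ≤ nu i := fun i hi => le_trans (hmuF i hi) (part1 i).1
  have hnu_pos : ∀ i ∈ F, 0 < nu i := fun i hi => lt_of_lt_of_le hmuk (hnuF i hi)
  -- the candidate pseudoinverse
  set P0 : Matrix (Fin p) (Fin p) ℝ := ∑ i ∈ F, (nu i)⁻¹ • vecMulVec (wt i) (wt i) with hP0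
  set B : Matrix (Fin p) (Fin p) ℝ := ∑ i ∈ F, nu i • vecMulVec (wt i) (wt i) with hB
  set Pi : Matrix (Fin p) (Fin p) ℝ := ∑ i ∈ F, vecMulVec (wt i) (wt i) with hPi
  have hPi' : Pi = ∑ i ∈ F, (1:ℝ) • vecMulVec (wt i) (wt i) := by simp [hPi]
  have hBP0 : B * P0 = Pi := by
    rw [hB, hP0, PoisonAux.mulWW wt hwt_orth, hPi']
    exact Finset.sum_congr rfl fun i hi => by
      rw [mul_inv_cancel₀ (ne_of_gt (hnu_pos i hi))]
  have hP0B : P0 * B = Pi := by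
    rw [hB, hP0, PoisonAux.mulWW wt hwt_orth, hPi']
    exact Finset.sum_congr rfl fun i hi => by
      rw [inv_mul_cancel₀ (ne_of_gt (hnu_pos i hi))]
  have hPiB : Pi * B = B := by
    rw [hB, hPi', PoisonAux.mulWW wt hwt_orth]
    exact Finset.sum_congr rfl fun i hi => by rw [one_mul]
  have hPiP0 : Pi * P0 = P0 := by
    rw [hP0, hPi', PoisonAux.mulWW wt hwt_orth]
    exact Finset.sum_congr rfl fun i hi => by rw [one_mul]
  have hPiT : Piᵀ = Pi := by
    rw [hPi, Matrix.transpose_sum]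
    exact Finset.sum_congr rfl fun i hi => by
      ext s t; simp [Matrix.transpose_apply, Matrix.vecMulVec_apply, mul_comm]
  have hMP0 : IsMoorePenrose B P0 := by
    refine ⟨?_, ?_, ?_, ?_⟩
    · rw [hBP0, hPiB]
    · rw [hP0B, hPiP0]
    · rw [hBP0, hPiT]
    · rw [hP0B, hPiT]
  have hBdagP0 : Bdag = P0 := PoisonAux.mp_unique hBdag hMP0
  -- the trace computation
  have htrace : Matrix.trace (Bdag * Cxx)
      = ∑ i ∈ F, (nu i)⁻¹ * (wt i ⬝ᵥ (Cxx *ᵥ wt i)) := by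
    rw [hBdagP0, hP0, Finset.sum_mul, Matrix.trace_sum]
    refine Finset.sum_congr rfl fun i hi => ?_
    rw [Matrix.smul_mul, Matrix.trace_smul, PoisonAux.trace_vmv_mul]
    simp
  -- bound each term
  have hbound : ∀ i ∈ F, (nu i)⁻¹ * (wt i ⬝ᵥ (Cxx *ᵥ wt i)) ≤ (mu km)⁻¹ * lam ⟨0, by omega⟩ := by
    intro i hi
    have hqf : wt i ⬝ᵥ (Cxx *ᵥ wt i) = ∑ j, lam j * (u j ⬝ᵥ wt i)^2 := by
      rw [hCdec]; exact PoisonAux.quad_form lam u (wt i)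
    have ht0 : 0 ≤ wt i ⬝ᵥ (Cxx *ᵥ wt i) := by
      rw [hqf]
      exact Finset.sum_nonneg fun j _ => mul_nonneg (hlam_nonneg j) (sq_nonneg _)
    have ht1 : wt i ⬝ᵥ (Cxx *ᵥ wt i) ≤ lam ⟨0, by omega⟩ := by
      rw [hqf]
      calc ∑ j, lam j * (u j ⬝ᵥ wt i)^2
          ≤ ∑ j, lam ⟨0, by omega⟩ * (u j ⬝ᵥ wt i)^2 := by
            refine Finset.sum_le_sum fun j _ => ?_
            exact mul_le_mul_of_nonneg_right
              (hlam_anti ⟨0, by omega⟩ j (by rw [Fin.le_def]; simp)) (sq_nonneg _)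
        _ = lam ⟨0, by omega⟩ * ∑ j, (u j ⬝ᵥ wt i)^2 := by rw [Finset.mul_sum]
        _ = lam ⟨0, by omega⟩ := by
            rw [PoisonAux.parseval u hu_orth (wt i), hwt_orth i i]
            simp
    have hinv : (nu i)⁻¹ ≤ (mu km)⁻¹ := by
      have h := hnuF i hi
      gcongr
    calc (nu i)⁻¹ * (wt i ⬝ᵥ (Cxx *ᵥ wt i)) ≤ (mu km)⁻¹ * (wt i ⬝ᵥ (Cxx *ᵥ wt i)) :=
          mul_le_mul_of_nonneg_right hinv ht0
      _ ≤ (mu km)⁻¹ * lam ⟨0, by omega⟩ :=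
          mul_le_mul_of_nonneg_left ht1 (inv_nonneg.mpr hmuk.le)
  have hcard : F.card = k := PoisonAux.card_filter_lt k hkp
  calc Matrix.trace (Bdag * Cxx) = ∑ i ∈ F, (nu i)⁻¹ * (wt i ⬝ᵥ (Cxx *ᵥ wt i)) := htrace
    _ ≤ ∑ _i ∈ F, (mu km)⁻¹ * lam ⟨0, by omega⟩ := Finset.sum_le_sum hbound
    _ = (k : ℝ) * lam ⟨0, by omega⟩ / mu km := by
        rw [Finset.sum_const, hcard, nsmul_eq_mul]
        field_simp
end
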